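/- arXiv:1902.07680 — 2 statements merged into one kernel-verified Lean document; each statement's English description precedes it below -/
import Mathlib

section
/- Let A′, A″ ⊆ Sym2 S each be i-connected sets of unordered pairs of distinct points of the circle S, and suppose that no element of A′ links any element of A″. If g′ is an unordered pair with both of its points in the closure of T(A′) and g″ is an unordered pair with both of its points in the closure of T(A″), then g′ does not link g″. (In particular, boundary geodesics of the convex hulls of two distinct i-connected components of a set of geodesics never intersect transversally: i(Δ(Hull A′), Δ(Hull A″)) = 0.) -/
/- STATEMENT 1: Let A′, A″ ⊆ Sym2 S each be i-connected sets of unordered pairs of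
distinct points of the circle S, and suppose that no element of A′ links any element
of A″. If g′ is an unordered pair with both of its points in the closure of T(A′) and
g″ is an unordered pair with both of its points in the closure of T(A″), then g′ does
not link g″. -/

attribute [local instance] ZeroLEOneClass.factZeroLtOne

noncomputable section

/-- The circle ℝ/ℤ. -/
abbrev Circle' : Type := AddCircle (1 : ℝ)

/-- The ordered pairs `(a,b)` and `(c,d)` link. -/
def LinkPair (a b c d : Circle') : Prop :=
  (sbtw a c b ∧ sbtw b d a) ∨ (sbtw a d b ∧ sbtw b c a)

/-- Two unordered pairs of points of the circle link. -/
def Links (g h : Sym2 Circle') : Prop :=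
  ∃ a b c d : Circle', g = s(a, b) ∧ h = s(c, d) ∧ LinkPair a b c d

/-- `T A`: the set of all points of the circle occurring in pairs of `A`. -/
def pts (A : Set (Sym2 Circle')) : Set Circle' := {x | ∃ s ∈ A, x ∈ s}

/-- The linking graph of `A`: vertices are the elements of `A`, and two distinct
vertices are adjacent iff they link. -/
def linkGraph (A : Set (Sym2 Circle')) : SimpleGraph A :=
  SimpleGraph.fromRel fun g h => Links g.1 h.1

/-- `A` is i-connected if its linking graph is connected. -/
def IConnected (A : Set (Sym2 Circle')) : Prop := (linkGraph A).Connected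


section CircOrd
variable {α : Type*} [CircularOrder α]

lemma btw_cases' {a b c : α} (hac : a ≠ c) (h : btw a b c) : b = a ∨ b = c ∨ sbtw a b c := by
  by_cases hb : btw c b a
  · rcases h.antisymm hb with h1 | h1 | h1
    · exact Or.inl h1.symm
    · exact Or.inr (Or.inl h1)
    · exact absurd h1.symm hac
  · exact Or.inr (Or.inr (sbtw_iff_not_btw.2 hb))

lemma sbtw_mid {x y z w : α} (h1 : sbtw x y z) (h2 : sbtw y w z) : sbtw x y w := by
  have a2 : sbtw y w x := sbtw_trans_right h2 h1.cyclic_left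
  exact a2.cyclic_left.cyclic_left

lemma lemC {a b c d : α} (h1 : sbtw a b c) (h2 : btw a c d) (had : a ≠ d) : sbtw a b d := by
  rcases btw_cases' had h2 with rfl | rfl | hs
  · exact absurd h1 sbtw_irrefl_left_right
  · exact h1
  · exact sbtw_trans_right h1 hs

lemma lemD {a b x c : α} (h1 : btw a b c) (h2 : sbtw b x c) (hac : a ≠ c) : sbtw a x c := by
  rcases btw_cases' hac h1 with rfl | rfl | hs
  · exact h2
  · exact absurd h2 sbtw_irrefl_left_right
  · exact hs.trans_left h2

end CircOrd

lemma linkPair_symm {a b c d : Circle'} (h : LinkPair a b c d) : LinkPair c d a b := by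
  rcases h with ⟨h1, h2⟩ | ⟨h1, h2⟩
  · have k1 : sbtw c b a := h1.cyclic_left
    exact Or.inr ⟨sbtw_mid k1 h2, (k1.trans_left h2).cyclic_left⟩
  · have k1 : sbtw d b a := h1.cyclic_left
    exact Or.inl ⟨(k1.trans_left h2).cyclic_left, sbtw_mid k1 h2⟩

lemma sides_of_not_linkPair {a b c d : Circle'} (h : ¬ LinkPair a b c d) :
    (btw a c b ∧ btw a d b) ∨ (btw b c a ∧ btw b d a) := by
  rw [LinkPair, not_or, not_and_or, not_and_or] at h
  obtain ⟨h1, h2⟩ := h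
  have e1 : btw b c a ∨ btw a d b := by
    rcases h1 with h | h
    · exact Or.inl (btw_iff_not_sbtw.2 h)
    · exact Or.inr (btw_iff_not_sbtw.2 h)
  have e2 : btw b d a ∨ btw a c b := by
    rcases h2 with h | h
    · exact Or.inl (btw_iff_not_sbtw.2 h)
    · exact Or.inr (btw_iff_not_sbtw.2 h)
  rcases e1 with h1 | h1 <;> rcases e2 with h2 | h2
  · exact Or.inr ⟨h1, h2⟩
  · rcases btw_total a d b with h3 | h3
    · exact Or.inl ⟨h2, h3⟩
    · exact Or.inr ⟨h1, h3⟩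
  · rcases btw_total a c b with h3 | h3
    · exact Or.inl ⟨h3, h1⟩
    · exact Or.inr ⟨h3, h2⟩
  · exact Or.inl ⟨h2, h1⟩

lemma not_linkPair_of_btw {c d x y : Circle'} (h1 : btw c x d) (h2 : btw c y d) :
    ¬ LinkPair c d x y := by
  rintro (⟨k1, k2⟩ | ⟨k1, k2⟩)
  · exact k2.not_btw h2
  · exact k2.not_btw h1

lemma claimM {c d p q u v : Circle'} (hcd : c ≠ d) (hp : btw c p d) (hq : btw c q d)
    (hU : sbtw p u q) (hV : sbtw q v p) (hv' : btw d v c) : btw c u d := by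
  by_contra hcon
  have hcon' : sbtw d u c := sbtw_iff_not_btw.2 hcon
  rcases btw_cases' hcd hq with rfl | rfl | hqs
  · exact (lemC hV hp hcd).not_btw hv'
  · exact (lemD hp hU hcd).not_btw (hcon'.btw)
  · rcases btw_cases' hcd hp with rfl | rfl | hps
    · exact (lemC hU hq hcd).not_btw (hcon'.btw)
    · exact (lemD hq hV hcd).not_btw hv'
    · have s2 : sbtw q u c := hqs.cyclic_left.trans_left hcon'
      have s4 : sbtw p c q := hU.trans_left s2.cyclic_left
      have s6 : sbtw c v p := s4.cyclic_left.trans_left hV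
      exact (sbtw_trans_right s6 hps).not_btw hv'

lemma lemL4 {c d p q u v : Circle'} (hcd : c ≠ d) (hp : btw c p d) (hq : btw c q d)
    (hlk : LinkPair p q u v) (hnl : ¬ LinkPair c d u v) : btw c u d ∧ btw c v d := by
  rcases sides_of_not_linkPair hnl with h | ⟨h1, h2⟩
  · exact h
  rcases hlk with ⟨hU, hV⟩ | ⟨hU, hV⟩
  · exact ⟨claimM hcd hp hq hU hV h2, claimM hcd hq hp hV hU h1⟩
  · exact ⟨claimM hcd hq hp hV hU h2, claimM hcd hp hq hU hV h1⟩

lemma linkPair_swap_left {a b c d : Circle'} (h : LinkPair a b c d) : LinkPair b a c d := by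
  unfold LinkPair at *; tauto

lemma linkPair_swap_right {a b c d : Circle'} (h : LinkPair a b c d) : LinkPair a b d c := by
  unfold LinkPair at *; tauto

lemma links_mk_iff {a b c d : Circle'} : Links s(a, b) s(c, d) ↔ LinkPair a b c d := by
  constructor
  · rintro ⟨p, q, r, s, h1, h2, hlp⟩
    rw [Sym2.eq_iff] at h1 h2
    rcases h1 with ⟨rfl, rfl⟩ | ⟨rfl, rfl⟩ <;> rcases h2 with ⟨rfl, rfl⟩ | ⟨rfl, rfl⟩
    · exact hlp
    · exact linkPair_swap_right hlp
    · exact linkPair_swap_left hlp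
    · exact linkPair_swap_left (linkPair_swap_right hlp)
  · intro h; exact ⟨a, b, c, d, rfl, rfl, h⟩

lemma links_symm {g h : Sym2 Circle'} (hl : Links g h) : Links h g := by
  obtain ⟨p, q, r, s, rfl, rfl, hlp⟩ := hl
  exact ⟨r, s, p, q, rfl, rfl, linkPair_symm hlp⟩

lemma sym2_exists_rep (g : Sym2 Circle') : ∃ p q, g = s(p, q) := by
  induction g using Sym2.ind with | _ p q => exact ⟨p, q, rfl⟩

lemma isClosed_btw (c d : Circle') : IsClosed {x : Circle' | btw c x d} := by
  induction c using QuotientAddGroup.induction_on with | H c₀ => ?_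
  induction d using QuotientAddGroup.induction_on with | H d₀ => ?_
  have hp : (0:ℝ) < 1 := one_pos
  set t := toIocMod hp 0 (d₀ - c₀) with ht
  have htm := toIocMod_mem_Ioc hp 0 (d₀ - c₀)
  rw [zero_add] at htm
  have hset : {x : Circle' | btw ↑c₀ x ↑d₀} = (↑) '' Set.Icc c₀ (c₀ + t) := by
    ext x
    induction x using QuotientAddGroup.induction_on with | H x₀ => ?_
    simp only [Set.mem_setOf_eq, Set.mem_image]
    constructor
    · intro hbtw
      rw [QuotientAddGroup.btw_coe_iff'] at hbtw
      set r := toIcoMod hp 0 (x₀ - c₀) with hr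
      have hrm := toIcoMod_mem_Ico hp 0 (x₀ - c₀)
      rw [zero_add] at hrm
      refine ⟨c₀ + r, ⟨le_add_of_nonneg_right hrm.1, by linarith [hbtw]⟩, ?_⟩
      rw [QuotientAddGroup.eq_iff_sub_mem]
      have : c₀ + r - x₀ = r - (x₀ - c₀) := by ring
      rw [this, hr, toIcoMod_sub_self]
      exact AddSubgroup.zsmul_mem_zmultiples _ _
    · rintro ⟨s, ⟨hs1, hs2⟩, hmk⟩
      rw [← hmk, QuotientAddGroup.btw_coe_iff']
      by_cases hlt : s - c₀ < 1
      · rw [toIcoMod_eq_self hp |>.2 ⟨by linarith, by rwa [zero_add]⟩]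
        linarith
      · have h1 : s - c₀ = 1 := le_antisymm (by linarith [htm.2]) (by linarith)
        have : toIcoMod hp 0 (s - c₀) = 0 := by
          rw [h1]
          simpa using toIcoMod_apply_right hp 0
        rw [this]; exact htm.1.le
  rw [hset]
  exact (isCompact_Icc.image (AddCircle.continuous_mk' 1)).isClosed

lemma edge_side {A : Set (Sym2 Circle')} {c d : Circle'} (hcd : c ≠ d)
    (hno : ∀ g ∈ A, ¬ Links g s(c, d)) {x y : A} (hadj : (linkGraph A).Adj x y)
    (hx : ∀ z ∈ x.1, btw c z d) : ∀ z ∈ y.1, btw c z d := by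
  rw [linkGraph, SimpleGraph.fromRel_adj] at hadj
  obtain ⟨hne, hl⟩ := hadj
  have hl' : Links x.1 y.1 := by
    rcases hl with h | h
    · exact h
    · exact links_symm h
  obtain ⟨p, q, u, v, hx1, hy1, hlp⟩ := hl'
  have hbp : btw c p d := hx p (by rw [hx1]; exact Sym2.mem_mk_left p q)
  have hbq : btw c q d := hx q (by rw [hx1]; exact Sym2.mem_mk_right p q)
  have hnl : ¬ LinkPair c d u v := fun k =>
    hno y.1 y.2 (by rw [hy1]; exact links_mk_iff.2 (linkPair_symm k))
  obtain ⟨hu, hv⟩ := lemL4 hcd hbp hbq hlp hnl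
  intro z hz
  rw [hy1, Sym2.mem_iff] at hz
  rcases hz with rfl | rfl
  · exact hu
  · exact hv

lemma walk_side {A : Set (Sym2 Circle')} {c d : Circle'} (hcd : c ≠ d)
    (hno : ∀ g ∈ A, ¬ Links g s(c, d)) {x y : A} (w : (linkGraph A).Walk x y)
    (hx : ∀ z ∈ x.1, btw c z d) : ∀ z ∈ y.1, btw c z d := by
  induction w with
  | nil => exact hx
  | cons h p ih => exact ih (edge_side hcd hno h hx)

lemma step_side (A : Set (Sym2 Circle')) (hconn : IConnected A) (c d : Circle') (hcd : c ≠ d)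
    (hno : ∀ g ∈ A, ¬ Links g s(c, d)) :
    (∀ x ∈ pts A, btw c x d) ∨ (∀ x ∈ pts A, btw d x c) := by
  obtain ⟨⟨g0, hg0⟩⟩ := hconn.nonempty
  obtain ⟨p0, q0, rfl⟩ := sym2_exists_rep g0
  have hno' : ∀ g ∈ A, ¬ Links g s(d, c) := by
    intro g hg
    rw [Sym2.eq_swap]
    exact hno g hg
  have hnlp : ¬ LinkPair c d p0 q0 := fun k =>
    hno _ hg0 (links_mk_iff.2 (linkPair_symm k))
  have main : ∀ (c' d' : Circle'), c' ≠ d' → (∀ g ∈ A, ¬ Links g s(c', d')) →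
      btw c' p0 d' → btw c' q0 d' → ∀ x ∈ pts A, btw c' x d' := by
    intro c' d' hcd' hno'' hb1 hb2 x hxp
    obtain ⟨g, hgA, hxg⟩ := hxp
    obtain ⟨w⟩ := hconn.preconnected ⟨s(p0, q0), hg0⟩ ⟨g, hgA⟩
    refine walk_side hcd' hno'' w ?_ x hxg
    intro z hz
    rw [Sym2.mem_iff] at hz
    rcases hz with rfl | rfl
    · exact hb1
    · exact hb2
  rcases sides_of_not_linkPair hnlp with ⟨h1, h2⟩ | ⟨h1, h2⟩
  · exact Or.inl (main c d hcd hno h1 h2)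
  · exact Or.inr (main d c hcd.symm hno' h1 h2)

theorem no_linking_between_hulls_of_unlinked_iconnected_sets
    (A' A'' : Set (Sym2 Circle'))
    (hA' : ∀ s ∈ A', ¬ s.IsDiag) (hA'' : ∀ s ∈ A'', ¬ s.IsDiag)
    (hconn' : IConnected A') (hconn'' : IConnected A'')
    (hno : ∀ g ∈ A', ∀ h ∈ A'', ¬ Links g h)
    (a b : Circle') (ha : a ∈ closure (pts A')) (hb : b ∈ closure (pts A'))
    (c d : Circle') (hc : c ∈ closure (pts A'')) (hd : d ∈ closure (pts A'')) :
    ¬ Links s(a, b) s(c, d) := by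
  rw [links_mk_iff]
  by_cases hab : a = b
  · subst hab
    rintro (⟨k, -⟩ | ⟨k, -⟩) <;> exact sbtw_irrefl_left_right k
  have key1 : ∀ h ∈ A'', ¬ Links s(a, b) h := by
    intro h hh
    obtain ⟨c₀, d₀, rfl⟩ := sym2_exists_rep h
    have hcd : c₀ ≠ d₀ := fun e => hA'' _ hh (Sym2.mk_isDiag_iff.2 e)
    have hnoA : ∀ g ∈ A', ¬ Links g s(c₀, d₀) := fun g hg => hno g hg _ hh
    rw [links_mk_iff]
    rcases step_side A' hconn' c₀ d₀ hcd hnoA with hs | hs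
    · have hcl : closure (pts A') ⊆ {x | btw c₀ x d₀} :=
        closure_minimal hs (isClosed_btw _ _)
      exact fun k => not_linkPair_of_btw (hcl ha) (hcl hb) (linkPair_symm k)
    · have hcl : closure (pts A') ⊆ {x | btw d₀ x c₀} :=
        closure_minimal hs (isClosed_btw _ _)
      exact fun k =>
        not_linkPair_of_btw (hcl ha) (hcl hb) (linkPair_swap_left (linkPair_symm k))
  intro k
  have hnoA'' : ∀ g ∈ A'', ¬ Links g s(a, b) := fun g hg l => key1 g hg (links_symm l)
  rcases step_side A'' hconn'' a b hab hnoA'' with hs | hs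
  · have hcl : closure (pts A'') ⊆ {x | btw a x b} := closure_minimal hs (isClosed_btw _ _)
    exact not_linkPair_of_btw (hcl hc) (hcl hd) k
  · have hcl : closure (pts A'') ⊆ {x | btw b x a} := closure_minimal hs (isClosed_btw _ _)
    exact not_linkPair_of_btw (hcl hc) (hcl hd) (linkPair_swap_left k)
end
end

section
/- Let x, y, z ∈ ℍ satisfy dist x y + dist y z = dist x z (i.e. x, y, z lie in this order on a hyperbolic geodesic). Then G⋔([x,z)) is the disjoint union of G⋔([x,y)) and G⋔([y,z)): G⋔([x,z)) = G⋔([x,y)) ∪ G⋔([y,z)) and G⋔([x,y)) ∩ G⋔([y,z)) = ∅; likewise G⋔((x,z]) is the disjoint union of G⋔((x,y]) and G⋔((y,z]). -/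
/- STATEMENT 5: Let x, y, z ∈ ℍ satisfy dist x y + dist y z = dist x z. Then G⋔([x,z))
is the disjoint union of G⋔([x,y)) and G⋔([y,z)), and likewise G⋔((x,z]) is the
disjoint union of G⋔((x,y]) and G⋔((y,z]). -/

open OnePoint
open scoped UpperHalfPlane MatrixGroups
open Real

noncomputable section

/-- The geodesic of ℍ with ideal endpoints the unordered pair `s` of boundary points:
a Euclidean half-circle for a pair of distinct reals, a vertical line for a pair
`{x, ∞}`, and ∅ for a diagonal pair. -/
def geod (s : Sym2 (OnePoint ℝ)) : Set ℍ :=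
  {z | (∃ a b : ℝ, a ≠ b ∧ s = s((a : OnePoint ℝ), (b : OnePoint ℝ)) ∧
          ‖(z : ℂ) - (↑a + ↑b) / 2‖ = |b - a| / 2) ∨
       (∃ x : ℝ, s = s((x : OnePoint ℝ), ∞) ∧ z.re = x)}

/-- The half-open hyperbolic segment `[x,y)`; the segment `(x,y]` is `segCO y x`. -/
def segCO (x y : ℍ) : Set ℍ := {z | dist x z + dist z y = dist x y} \ {y}

/-- `G⋔(I)`: the set of geodesics crossing `I` in exactly one point. -/
def Gcross (I : Set ℍ) : Set (Sym2 (OnePoint ℝ)) := {s | ∃ z, geod s ∩ I = {z}}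




-- strict version of dist_log_im_le
lemma dist_log_im_lt (z w : ℍ) (h : z.re ≠ w.re) :
    dist (Real.log z.im) (Real.log w.im) < dist z w := by
  set z' : ℍ := UpperHalfPlane.mk ⟨0, z.im⟩ z.im_pos with hz'
  set w' : ℍ := UpperHalfPlane.mk ⟨0, w.im⟩ w.im_pos with hw'
  have h1 : dist (Real.log z.im) (Real.log w.im) = dist z' w' :=
    Eq.symm <| UpperHalfPlane.dist_of_re_eq rfl
  rw [h1, UpperHalfPlane.dist_eq, UpperHalfPlane.dist_eq]
  have him : dist (z' : ℂ) (w' : ℂ) < dist (z : ℂ) (w : ℂ) := by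
    have hre : ((z : ℂ) - w).re ≠ 0 := by
      simpa [Complex.sub_re, sub_ne_zero] using h
    have hlt := (Complex.abs_im_lt_norm (z := (z : ℂ) - w)).2 hre
    have e1 : dist (z' : ℂ) (w' : ℂ) = |z.im - w.im| := by
      rw [Complex.dist_of_re_eq (by simp [hz', hw'])]; simp [hz', hw', Real.dist_eq]
    have e2 : |z.im - w.im| = |((z : ℂ) - w).im| := by simp
    rw [e1, e2, Complex.dist_eq]; exact hlt
  have hieq : (z'.im * w'.im) = z.im * w.im := by simp [hz', hw']
  rw [hieq]
  have hden : (0:ℝ) < 2 * Real.sqrt (z.im * w.im) := by positivity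
  have := Real.arsinh_lt_arsinh.2 (div_lt_div_of_pos_right him hden)
  linarith

-- equality case on vertical lines
lemma vert_btw {x w z : ℍ} (hxz : x.re = z.re) (h : dist x w + dist w z = dist x z) :
    w.re = x.re ∧
      dist (Real.log x.im) (Real.log w.im) + dist (Real.log w.im) (Real.log z.im)
        = dist (Real.log x.im) (Real.log z.im) := by
  have L1 := UpperHalfPlane.dist_log_im_le x w
  have L2 := UpperHalfPlane.dist_log_im_le w z
  have L3 : dist x z = dist (Real.log x.im) (Real.log z.im) :=
    UpperHalfPlane.dist_of_re_eq hxz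
  have T : dist (Real.log x.im) (Real.log z.im) ≤
      dist (Real.log x.im) (Real.log w.im) + dist (Real.log w.im) (Real.log z.im) :=
    dist_triangle _ _ _
  constructor
  · by_contra hre
    have := dist_log_im_lt x w (fun hh => hre hh.symm)
    linarith
  · linarith



def gmat (a b : ℝ) (hab : a < b) : SL(2, ℝ) :=
  ⟨!![1 / Real.sqrt (b - a), -b / Real.sqrt (b - a);
      1 / Real.sqrt (b - a), -a / Real.sqrt (b - a)], by
    have h : (0:ℝ) < b - a := sub_pos.2 hab
    set s := Real.sqrt (b - a) with hsdef
    have hs : s ≠ 0 := by positivity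
    have hss : s * s = b - a := Real.mul_self_sqrt h.le
    rw [Matrix.det_fin_two_of]
    field_simp
    rw [sq, hss]; ring⟩


lemma gmat_coe (a b : ℝ) (hab : a < b) (w : ℍ) :
    ((gmat a b hab • w : ℍ) : ℂ) = ((w : ℂ) - b) / ((w : ℂ) - a) := by
  have h : (0:ℝ) < b - a := sub_pos.2 hab
  have hs : Real.sqrt (b - a) ≠ 0 := by positivity
  have hsc : ((Real.sqrt (b - a) : ℝ) : ℂ) ≠ 0 := by exact_mod_cast hs
  have hwa : (w : ℂ) - a ≠ 0 := by
    intro hc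
    have := congrArg Complex.im hc
    simp [UpperHalfPlane.coe_im] at this
    exact w.im_ne_zero this
  rw [UpperHalfPlane.specialLinearGroup_apply]
  rw [UpperHalfPlane.coe_mk]
  have e00 : (gmat a b hab) 0 0 = 1 / Real.sqrt (b - a) := rfl
  have e01 : (gmat a b hab) 0 1 = -b / Real.sqrt (b - a) := rfl
  have e10 : (gmat a b hab) 1 0 = 1 / Real.sqrt (b - a) := rfl
  have e11 : (gmat a b hab) 1 1 = -a / Real.sqrt (b - a) := rfl
  rw [e00, e01, e10, e11]
  simp only [algebraMap_apply, Algebra.algebraMap_self_apply]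
  push_cast
  rw [div_eq_div_iff]
  · ring
  · intro hc
    apply hwa
    have : ((w:ℂ) - a) / (Real.sqrt (b-a) : ℂ) = 0 := by rw [← hc]; ring
    rcases div_eq_zero_iff.1 this with h' | h'
    · exact absurd h' (by exact hwa)
    · exact absurd h' hsc
  · exact hwa


lemma hwa' (a : ℝ) (w : ℍ) : (w:ℂ) - a ≠ 0 := by
  intro hc
  have := congrArg Complex.im hc
  simp [UpperHalfPlane.coe_im] at this
  exact w.im_ne_zero this

lemma gmat_re_zero (a b : ℝ) (hab : a < b) (w : ℍ) :
    (gmat a b hab • w).re = 0 ↔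
      ‖(w : ℂ) - ((a : ℂ) + b) / 2‖ = |b - a| / 2 := by
  have hwa : (w:ℂ) - a ≠ 0 := hwa' a w
  have hns : Complex.normSq ((w:ℂ) - a) ≠ 0 := by simpa using Complex.normSq_pos.2 hwa |>.ne'
  have hre : (gmat a b hab • w).re
      = ((w.re - b) * (w.re - a) + w.im * w.im) / Complex.normSq ((w:ℂ) - a) := by
    rw [← UpperHalfPlane.coe_re, gmat_coe, Complex.div_re]
    simp [Complex.sub_re, Complex.sub_im, UpperHalfPlane.coe_re, UpperHalfPlane.coe_im]
    ring
  have hcast : ((a:ℂ) + b) / 2 = (((a + b) / 2 : ℝ) : ℂ) := by push_cast; ring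
  have habs : |b - a| = b - a := abs_of_pos (sub_pos.2 hab)
  have hr : (0:ℝ) ≤ (b - a) / 2 := by linarith
  rw [hre, div_eq_zero_iff, or_iff_left hns, habs, hcast,
    ← sq_eq_sq₀ (norm_nonneg _) hr, Complex.sq_norm, Complex.normSq_apply]
  simp only [Complex.sub_re, Complex.sub_im, Complex.ofReal_re, Complex.ofReal_im,
    UpperHalfPlane.coe_re, UpperHalfPlane.coe_im, sub_zero]
  have key : (w.re - (a + b) / 2) * (w.re - (a + b) / 2) + w.im * w.im - ((b - a) / 2) ^ 2
      = (w.re - b) * (w.re - a) + w.im * w.im := by ring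
  constructor <;> intro h <;> linarith



lemma exists_circle (u v : ℍ) (h : u.re ≠ v.re) :
    ∃ a b : ℝ, a < b ∧ ‖(u:ℂ) - ((a:ℂ) + b) / 2‖ = |b - a| / 2
      ∧ ‖(v:ℂ) - ((a:ℂ) + b) / 2‖ = |b - a| / 2 := by
  set c : ℝ := (u.re ^ 2 + u.im ^ 2 - v.re ^ 2 - v.im ^ 2) / (2 * (u.re - v.re)) with hcdef
  set r : ℝ := ‖(u:ℂ) - c‖ with hrdef
  have hr : 0 < r := by
    rw [hrdef]
    exact norm_pos_iff.mpr (hwa' c u)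
  have hsub : u.re - v.re ≠ 0 := sub_ne_zero.2 h
  clear_value r
  have hc : c * (2 * (u.re - v.re)) = u.re ^ 2 + u.im ^ 2 - v.re ^ 2 - v.im ^ 2 := by
    rw [hcdef]; field_simp
  have hcenter : (((c - r : ℝ) : ℂ) + ((c + r : ℝ) : ℂ)) / 2 = (c : ℂ) := by
    push_cast; ring
  have habs2 : |(c + r) - (c - r)| = 2 * r := by
    rw [show (c + r) - (c - r) = 2 * r by ring]
    exact abs_of_pos (by linarith)
  have hnormSq : Complex.normSq ((v:ℂ) - c) = Complex.normSq ((u:ℂ) - c) := by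
    simp only [Complex.normSq_apply, Complex.sub_re, Complex.sub_im, Complex.ofReal_re,
      Complex.ofReal_im, UpperHalfPlane.coe_re, UpperHalfPlane.coe_im, sub_zero]
    clear_value c
    linear_combination hc
  have hv : ‖(v:ℂ) - c‖ = r := by
    rw [hrdef, Complex.norm_def, Complex.norm_def, hnormSq]
  refine ⟨c - r, c + r, by linarith, ?_, ?_⟩
  · rw [hcenter, habs2, hrdef]; ring
  · rw [hcenter, habs2, hv]; ring

lemma exists_vert (u v : ℍ) : ∃ g : SL(2, ℝ), (g • u : ℍ).re = (g • v : ℍ).re := by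
  by_cases h : u.re = v.re
  · refine ⟨1, ?_⟩
    rw [one_smul, one_smul, h]
  · obtain ⟨a, b, hab, h1, h2⟩ := exists_circle u v h
    exact ⟨gmat a b hab, by rw [(gmat_re_zero a b hab u).2 h1, (gmat_re_zero a b hab v).2 h2]⟩

lemma exists_mid (u v : ℍ) :
    ∃ m : ℍ, dist u m + dist m v = dist u v ∧ dist u m = dist u v / 2 ∧
      dist m v = dist u v / 2 := by
  obtain ⟨g, hg⟩ := exists_vert u v
  set U := g • u with hU
  set V := g • v with hV
  have hM0 : 0 < Real.sqrt (U.im * V.im) := Real.sqrt_pos.2 (mul_pos U.im_pos V.im_pos)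
  set M : ℍ := UpperHalfPlane.mk ⟨U.re, Real.sqrt (U.im * V.im)⟩ hM0 with hMdef
  have hMre : M.re = U.re := rfl
  have hMim : M.im = Real.sqrt (U.im * V.im) := rfl
  have hlogM : Real.log M.im = (Real.log U.im + Real.log V.im) / 2 := by
    rw [hMim, Real.log_sqrt (mul_pos U.im_pos V.im_pos).le,
      Real.log_mul U.im_ne_zero V.im_ne_zero]
  have hUM : dist U M = |Real.log U.im - Real.log V.im| / 2 := by
    rw [UpperHalfPlane.dist_of_re_eq hMre.symm, Real.dist_eq, hlogM,
      show Real.log U.im - (Real.log U.im + Real.log V.im) / 2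
        = (Real.log U.im - Real.log V.im) / 2 by ring, abs_div, abs_two]
  have hMV : dist M V = |Real.log U.im - Real.log V.im| / 2 := by
    rw [UpperHalfPlane.dist_of_re_eq (show M.re = V.re by rw [hMre, hg]), Real.dist_eq, hlogM,
      show (Real.log U.im + Real.log V.im) / 2 - Real.log V.im
        = (Real.log U.im - Real.log V.im) / 2 by ring, abs_div, abs_two]
  have hUV : dist U V = |Real.log U.im - Real.log V.im| := by
    rw [UpperHalfPlane.dist_of_re_eq hg, Real.dist_eq]
  have h1 : dist u (g⁻¹ • M) = dist U M := by
    rw [← inv_smul_smul g u, ← hU, dist_smul]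
  have h2 : dist (g⁻¹ • M) v = dist M V := by
    rw [← inv_smul_smul g v, ← hV, dist_smul]
  have h3 : dist u v = dist U V := by
    rw [← inv_smul_smul g u, ← inv_smul_smul g v, ← hU, ← hV, dist_smul]
  refine ⟨g⁻¹ • M, ?_, ?_, ?_⟩
  · rw [h1, h2, h3, hUM, hMV, hUV]; ring
  · rw [h1, h3, hUM, hUV]
  · rw [h2, h3, hMV, hUV]


lemma geod_cases (s : Sym2 (OnePoint ℝ)) :
    geod s = ∅ ∨ (∃ x : ℝ, geod s = {z : ℍ | z.re = x}) ∨
      (∃ a b : ℝ, a < b ∧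
        geod s = {z : ℍ | ‖(z:ℂ) - ((a:ℂ) + b) / 2‖ = |b - a| / 2}) := by
  induction s using Sym2.ind with
  | _ e f =>
    have circ : ∀ (a b : ℝ), a < b →
        geod s((a : OnePoint ℝ), (b : OnePoint ℝ)) =
          {z : ℍ | ‖(z:ℂ) - ((a:ℂ) + b) / 2‖ = |b - a| / 2} := by
      intro a b hab
      ext z
      constructor
      · rintro (⟨a', b', hab', hs, hc⟩ | ⟨x', hs, _⟩)
        · rw [Sym2.eq_iff] at hs
          rcases hs with ⟨h1, h2⟩ | ⟨h1, h2⟩ <;>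
              rw [OnePoint.coe_eq_coe] at h1 h2 <;> subst h1 <;> subst h2
          · exact hc
          · rw [show ((b:ℂ) + a) / 2 = ((a:ℂ) + b) / 2 by ring, abs_sub_comm] at hc
            exact hc
        · exfalso
          rw [Sym2.eq_iff] at hs
          rcases hs with ⟨_, h2⟩ | ⟨h1, _⟩
          · exact OnePoint.coe_ne_infty b h2
          · exact OnePoint.coe_ne_infty a h1
      · intro h
        exact Or.inl ⟨a, b, hab.ne, rfl, h⟩
    induction e using OnePoint.rec with
    | infty =>
      induction f using OnePoint.rec with
      | infty =>
        left
        ext z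
        simp only [Set.mem_empty_iff_false, iff_false]
        rintro (⟨a', b', hab', hs, _⟩ | ⟨x', hs, _⟩) <;> rw [Sym2.eq_iff] at hs
        · rcases hs with ⟨h1, _⟩ | ⟨h1, _⟩
          · exact OnePoint.infty_ne_coe a' h1
          · exact OnePoint.infty_ne_coe b' h1
        · rcases hs with ⟨h1, _⟩ | ⟨_, h2⟩
          · exact OnePoint.infty_ne_coe x' h1
          · exact OnePoint.infty_ne_coe x' h2
      | coe x =>
        right; left
        refine ⟨x, ?_⟩
        ext z
        constructor
        · rintro (⟨a', b', hab', hs, _⟩ | ⟨x', hs, hre⟩) <;> rw [Sym2.eq_iff] at hs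
          · exfalso
            rcases hs with ⟨h1, _⟩ | ⟨h1, _⟩
            · exact OnePoint.infty_ne_coe a' h1
            · exact OnePoint.infty_ne_coe b' h1
          · rcases hs with ⟨h1, _⟩ | ⟨_, h2⟩
            · exact absurd h1 (OnePoint.infty_ne_coe x')
            · rw [OnePoint.coe_eq_coe] at h2
              show z.re = x
              exact hre.trans h2.symm
        · intro h
          right
          exact ⟨x, by rw [Sym2.eq_swap], h⟩
    | coe a =>
      induction f using OnePoint.rec with
      | infty =>
        right; left
        refine ⟨a, ?_⟩
        ext z
        constructor
        · rintro (⟨a', b', hab', hs, _⟩ | ⟨x', hs, hre⟩) <;> rw [Sym2.eq_iff] at hs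
          · exfalso
            rcases hs with ⟨_, h2⟩ | ⟨_, h2⟩
            · exact OnePoint.infty_ne_coe b' h2
            · exact OnePoint.infty_ne_coe a' h2
          · rcases hs with ⟨h1, _⟩ | ⟨h1, _⟩
            · rw [OnePoint.coe_eq_coe] at h1
              show z.re = a
              exact hre.trans h1.symm
            · exact absurd h1 (OnePoint.coe_ne_infty a)
        · intro h
          right
          exact ⟨a, rfl, h⟩
      | coe b =>
        rcases lt_trichotomy a b with hab | hab | hab
        · right; right; exact ⟨a, b, hab, circ a b hab⟩
        · left
          subst hab
          ext z
          simp only [Set.mem_empty_iff_false, iff_false]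
          rintro (⟨a', b', hab', hs, _⟩ | ⟨x', hs, _⟩) <;> rw [Sym2.eq_iff] at hs
          · rcases hs with ⟨h1, h2⟩ | ⟨h1, h2⟩ <;> rw [OnePoint.coe_eq_coe] at h1 h2 <;>
              exact hab' (by rw [← h1, ← h2])
          · rcases hs with ⟨_, h2⟩ | ⟨h1, _⟩
            · exact OnePoint.coe_ne_infty a h2
            · exact OnePoint.coe_ne_infty a h1
        · right; right
          refine ⟨b, a, hab, ?_⟩
          rw [Sym2.eq_swap]
          exact circ b a hab


lemma geod_exists (u v : ℍ) : ∃ s, u ∈ geod s ∧ v ∈ geod s := by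
  by_cases h : u.re = v.re
  · exact ⟨s((u.re : OnePoint ℝ), ∞), Or.inr ⟨u.re, rfl, rfl⟩, Or.inr ⟨u.re, rfl, h.symm⟩⟩
  · obtain ⟨a, b, hab, h1, h2⟩ := exists_circle u v h
    exact ⟨s((a : OnePoint ℝ), (b : OnePoint ℝ)), Or.inl ⟨a, b, hab.ne, rfl, h1⟩,
      Or.inl ⟨a, b, hab.ne, rfl, h2⟩⟩

-- no two distinct points with equal re on a circle; helpers for uniqueness
lemma circle_vert {a b : ℝ} {u v : ℍ} (hre : u.re = v.re)
    (hu : ‖(u:ℂ) - ((a:ℂ) + b) / 2‖ = |b - a| / 2)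
    (hv : ‖(v:ℂ) - ((a:ℂ) + b) / 2‖ = |b - a| / 2) : u = v := by
  have h1 := congrArg (· ^ 2) (hu.trans hv.symm)
  simp only [Complex.sq_norm, Complex.normSq_apply, Complex.sub_re, Complex.sub_im,
    UpperHalfPlane.coe_re, UpperHalfPlane.coe_im] at h1
  have hcast : (((a:ℂ) + b) / 2).re = (a + b) / 2 := by
    rw [show ((a:ℂ) + b) / 2 = (((a + b) / 2 : ℝ) : ℂ) by push_cast; ring, Complex.ofReal_re]
  have hcasti : (((a:ℂ) + b) / 2).im = 0 := by
    rw [show ((a:ℂ) + b) / 2 = (((a + b) / 2 : ℝ) : ℂ) by push_cast; ring, Complex.ofReal_im]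
  rw [hcast, hcasti, hre] at h1
  have him : u.im = v.im := by
    have h2 : u.im ^ 2 = v.im ^ 2 := by nlinarith [h1]
    have := sq_eq_sq₀ u.im_pos.le v.im_pos.le
    rw [← this]
    exact h2
  apply UpperHalfPlane.ext
  apply Complex.ext
  · exact hre
  · exact him

lemma circle_mem_iff (a b : ℝ) (hab : a < b) (w : ℍ) :
    ‖(w:ℂ) - ((a:ℂ) + b) / 2‖ = |b - a| / 2 ↔
      (w.re - (a + b) / 2) ^ 2 + w.im ^ 2 = ((b - a) / 2) ^ 2 := by
  rw [show ((a:ℂ) + b) / 2 = (((a + b) / 2 : ℝ) : ℂ) by push_cast; ring,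
    show |b - a| = b - a from abs_of_pos (by linarith),
    ← sq_eq_sq₀ (norm_nonneg _) (by linarith : (0:ℝ) ≤ (b - a) / 2),
    Complex.sq_norm, Complex.normSq_apply]
  simp only [Complex.sub_re, Complex.sub_im, Complex.ofReal_re, Complex.ofReal_im,
    UpperHalfPlane.coe_re, UpperHalfPlane.coe_im, sub_zero]
  constructor <;> intro h <;> nlinarith [h]

lemma geod_unique {s t : Sym2 (OnePoint ℝ)} {u v : ℍ} (huv : u ≠ v)
    (hus : u ∈ geod s) (hvs : v ∈ geod s) (hut : u ∈ geod t) (hvt : v ∈ geod t) :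
    geod s = geod t := by
  have key : ∀ s' : Sym2 (OnePoint ℝ), u ∈ geod s' → v ∈ geod s' →
      (∃ x : ℝ, geod s' = {z : ℍ | z.re = x}) ∨
      (∃ a b : ℝ, a < b ∧
        geod s' = {z : ℍ | ‖(z:ℂ) - ((a:ℂ) + b) / 2‖ = |b - a| / 2}) := by
    intro s' hu hv
    rcases geod_cases s' with h | h | h
    · rw [h] at hu; exact absurd hu (Set.notMem_empty u)
    · exact Or.inl h
    · exact Or.inr h
  rcases key s hus hvs with ⟨x1, hx1⟩ | ⟨a1, b1, hab1, hc1⟩ <;>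
    rcases key t hut hvt with ⟨x2, hx2⟩ | ⟨a2, b2, hab2, hc2⟩
  · -- both vertical
    rw [hx1] at hus; rw [hx2] at hut
    rw [hx1, hx2]
    have : x1 = x2 := by rw [← hus, ← hut]
    rw [this]
  · -- vertical and circle: contradiction
    exfalso
    rw [hx1] at hus hvs; rw [hc2] at hut hvt
    exact huv (circle_vert (hus.trans hvs.symm) hut hvt)
  · exfalso
    rw [hx2] at hut hvt; rw [hc1] at hus hvs
    exact huv (circle_vert (hut.trans hvt.symm) hus hvs)
  · -- both circles
    rw [hc1] at hus hvs; rw [hc2] at hut hvt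
    rw [hc1, hc2]
    have hu1 := (circle_mem_iff a1 b1 hab1 u).1 hus
    have hv1 := (circle_mem_iff a1 b1 hab1 v).1 hvs
    have hu2 := (circle_mem_iff a2 b2 hab2 u).1 hut
    have hv2 := (circle_mem_iff a2 b2 hab2 v).1 hvt
    have hkey : ((a2 + b2) / 2 - (a1 + b1) / 2) * (u.re - v.re) = 0 := by
      linear_combination (hu1 - hv1 - hu2 + hv2) / 2
    rcases mul_eq_zero.1 hkey with hcc | hre
    · have hceq : (a1 + b1) / 2 = (a2 + b2) / 2 := by linarith [sub_eq_zero.1 hcc]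
      have hrsq : ((b1 - a1) / 2) ^ 2 = ((b2 - a2) / 2) ^ 2 := by
        linear_combination hu2 - hu1 - (2 * u.re - (a1 + b1) / 2 - (a2 + b2) / 2) * hceq
      have hrr : (b1 - a1) / 2 = (b2 - a2) / 2 :=
        (sq_eq_sq₀ (by linarith) (by linarith)).1 hrsq
      have ha : a1 = a2 := by linarith
      have hb : b1 = b2 := by linarith
      rw [ha, hb]
    · exact absurd (circle_vert (sub_eq_zero.1 hre) hus hvs) huv

lemma geod_convex {s : Sym2 (OnePoint ℝ)} {u v w : ℍ} (hu : u ∈ geod s) (hv : v ∈ geod s)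
    (h : dist u w + dist w v = dist u v) : w ∈ geod s := by
  rcases geod_cases s with hc | ⟨x, hc⟩ | ⟨a, b, hab, hc⟩
  · rw [hc] at hu; exact absurd hu (Set.notMem_empty u)
  · rw [hc] at hu hv ⊢
    have hre : u.re = v.re := by
      rw [Set.mem_setOf_eq] at hu hv; rw [hu, hv]
    have := (vert_btw hre h).1
    show w.re = x
    rw [this]; exact hu
  · rw [hc] at hu hv ⊢
    have hgu : ((gmat a b hab) • u).re = 0 := (gmat_re_zero a b hab u).2 hu
    have hgv : ((gmat a b hab) • v).re = 0 := (gmat_re_zero a b hab v).2 hv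
    have hd : dist ((gmat a b hab) • u) ((gmat a b hab) • w)
        + dist ((gmat a b hab) • w) ((gmat a b hab) • v)
        = dist ((gmat a b hab) • u) ((gmat a b hab) • v) := by
      rw [dist_smul, dist_smul, dist_smul]; exact h
    have hwre := (vert_btw (hgu.trans hgv.symm) hd).1
    exact (gmat_re_zero a b hab w).1 (hwre.trans hgu)

lemma geod_extend {s : Sym2 (OnePoint ℝ)} {u v w : ℍ} (huv : u ≠ v)
    (hu : u ∈ geod s) (hv : v ∈ geod s) (h : dist u v + dist v w = dist u w) :
    w ∈ geod s := by
  by_cases hw : w = u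
  · rwa [hw]
  have huw : u ≠ w := fun he => hw he.symm
  obtain ⟨t, hut, hwt⟩ := geod_exists u w
  have hvt : v ∈ geod t := geod_convex hut hwt h
  rw [geod_unique huv hu hv hut hvt]
  exact hwt

lemma real_btw_bounds {A B C : ℝ} (hAC : A ≤ C) (hB : |A - B| + |B - C| = |A - C|) :
    A ≤ B ∧ B ≤ C := by
  constructor <;> by_contra hh <;> push_neg at hh
  · rw [abs_of_pos (by linarith : (0:ℝ) < A - B), abs_of_neg (by linarith : B - C < 0),
      abs_of_nonpos (by linarith : A - C ≤ 0)] at hB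
    linarith
  · rw [abs_of_neg (by linarith : A - B < 0), abs_of_pos (by linarith : (0:ℝ) < B - C),
      abs_of_nonpos (by linarith : A - C ≤ 0)] at hB
    linarith

lemma real_trich {A B C D : ℝ} (hB : dist A B + dist B C = dist A C)
    (hD : dist A D + dist D C = dist A C) :
    (dist A D + dist D B = dist A B) ∨ (dist B D + dist D C = dist B C) := by
  simp only [Real.dist_eq] at *
  rcases le_total A C with h0 | h0
  · obtain ⟨h1, h2⟩ := real_btw_bounds h0 hB
    obtain ⟨h3, h4⟩ := real_btw_bounds h0 hD
    rcases le_total D B with h5 | h5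
    · left
      rw [abs_of_nonpos (by linarith : A - D ≤ 0), abs_of_nonpos (by linarith : D - B ≤ 0),
        abs_of_nonpos (by linarith : A - B ≤ 0)]
      ring
    · right
      rw [abs_of_nonpos (by linarith : B - D ≤ 0), abs_of_nonpos (by linarith : D - C ≤ 0),
        abs_of_nonpos (by linarith : B - C ≤ 0)]
      ring
  · have hB' : |C - B| + |B - A| = |C - A| := by
      rw [abs_sub_comm C B, abs_sub_comm B A, abs_sub_comm C A]; linarith
    have hD' : |C - D| + |D - A| = |C - A| := by
      rw [abs_sub_comm C D, abs_sub_comm D A, abs_sub_comm C A]; linarith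
    obtain ⟨h1, h2⟩ := real_btw_bounds h0 hB'
    obtain ⟨h3, h4⟩ := real_btw_bounds h0 hD'
    rcases le_total B D with h5 | h5
    · left
      rw [abs_of_nonneg (by linarith : 0 ≤ A - D), abs_of_nonneg (by linarith : 0 ≤ D - B),
        abs_of_nonneg (by linarith : 0 ≤ A - B)]
      ring
    · right
      rw [abs_of_nonneg (by linarith : 0 ≤ B - D), abs_of_nonneg (by linarith : 0 ≤ D - C),
        abs_of_nonneg (by linarith : 0 ≤ B - C)]
      ring

lemma btw_trich {x y z w : ℍ} (hy : dist x y + dist y z = dist x z)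
    (hw : dist x w + dist w z = dist x z) :
    (dist x w + dist w y = dist x y) ∨ (dist y w + dist w z = dist y z) := by
  by_cases hxz : x = z
  · subst hxz
    have h0 : dist x x = 0 := dist_self x
    have hyx : y = x := by
      have : dist x y = 0 := by
        have := dist_nonneg (x := x) (y := y); have := dist_nonneg (x := y) (y := x); linarith
      exact (dist_eq_zero.1 (by rwa [dist_comm] at this)).symm ▸ (dist_eq_zero.1 this).symm
    have hwx : w = x := by
      have : dist x w = 0 := by
        have := dist_nonneg (x := x) (y := w); have := dist_nonneg (x := w) (y := x); linarith
      exact (dist_eq_zero.1 this).symm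
    left
    rw [hyx, hwx]
    simp
  obtain ⟨g, hg⟩ := exists_vert x z
  have hdy : dist (g • x) (g • y) + dist (g • y) (g • z) = dist (g • x) (g • z) := by
    rw [dist_smul, dist_smul, dist_smul]; exact hy
  have hdw : dist (g • x) (g • w) + dist (g • w) (g • z) = dist (g • x) (g • z) := by
    rw [dist_smul, dist_smul, dist_smul]; exact hw
  obtain ⟨hYre, hYlog⟩ := vert_btw hg hdy
  obtain ⟨hWre, hWlog⟩ := vert_btw hg hdw
  rcases real_trich hYlog hWlog with h | h
  · left
    have e1 : dist x w = dist (Real.log (g • x).im) (Real.log (g • w).im) := by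
      rw [← dist_smul g x w]; exact UpperHalfPlane.dist_of_re_eq hWre.symm
    have e2 : dist w y = dist (Real.log (g • w).im) (Real.log (g • y).im) := by
      rw [← dist_smul g w y]; exact UpperHalfPlane.dist_of_re_eq (hWre.trans hYre.symm)
    have e3 : dist x y = dist (Real.log (g • x).im) (Real.log (g • y).im) := by
      rw [← dist_smul g x y]; exact UpperHalfPlane.dist_of_re_eq hYre.symm
    rw [e1, e2, e3]; exact h
  · right
    have e1 : dist y w = dist (Real.log (g • y).im) (Real.log (g • w).im) := by
      rw [← dist_smul g y w]; exact UpperHalfPlane.dist_of_re_eq (hYre.trans hWre.symm)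
    have e2 : dist w z = dist (Real.log (g • w).im) (Real.log (g • z).im) := by
      rw [← dist_smul g w z]
      exact UpperHalfPlane.dist_of_re_eq (hWre.trans hg)
    have e3 : dist y z = dist (Real.log (g • y).im) (Real.log (g • z).im) := by
      rw [← dist_smul g y z]; exact UpperHalfPlane.dist_of_re_eq (hYre.trans hg)
    rw [e1, e2, e3]; exact h



section SegLemmas

variable {x y z : ℍ}

lemma seg_mem_ne {w : ℍ} (h : w ∈ segCO x y) : w ≠ y := h.2

lemma seg_mem_btw {w : ℍ} (h : w ∈ segCO x y) : dist x w + dist w y = dist x y := h.1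

lemma seg_left (hcol : dist x y + dist y z = dist x z) : segCO x y ⊆ segCO x z := by
  rintro w ⟨hb, hne⟩
  have hb : dist x w + dist w y = dist x y := hb
  have t1 : dist w z ≤ dist w y + dist y z := dist_triangle w y z
  have t2 : dist x z ≤ dist x w + dist w z := dist_triangle x w z
  constructor
  · show dist x w + dist w z = dist x z
    linarith
  · intro hwz
    rw [Set.mem_singleton_iff] at hwz
    subst hwz
    have hc : dist y w = dist w y := dist_comm y w
    have hww : dist w y = 0 := by linarith
    exact (Set.mem_singleton_iff.not.1 hne) (dist_eq_zero.1 hww)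

lemma seg_right (hcol : dist x y + dist y z = dist x z) : segCO y z ⊆ segCO x z := by
  rintro w ⟨hb, hne⟩
  have hb : dist y w + dist w z = dist y z := hb
  have t1 : dist x w ≤ dist x y + dist y w := dist_triangle x y w
  have t2 : dist x z ≤ dist x w + dist w z := dist_triangle x w z
  exact ⟨show dist x w + dist w z = dist x z by linarith, hne⟩

lemma seg_disjoint (hcol : dist x y + dist y z = dist x z) :
    segCO x y ∩ segCO y z = ∅ := by
  ext w
  simp only [Set.mem_inter_iff, Set.mem_empty_iff_false, iff_false, not_and]
  rintro ⟨h1, hne1⟩ ⟨h2, hne2⟩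
  have h1 : dist x w + dist w y = dist x y := h1
  have h2 : dist y w + dist w z = dist y z := h2
  have t : dist x z ≤ dist x w + dist w z := dist_triangle x w z
  have hc : dist y w = dist w y := dist_comm y w
  have nn : 0 ≤ dist w y := dist_nonneg
  have hwy : dist w y = 0 := by linarith
  exact (Set.mem_singleton_iff.not.1 hne1) (dist_eq_zero.1 hwy)

lemma seg_union (hcol : dist x y + dist y z = dist x z) :
    segCO x z ⊆ segCO x y ∪ segCO y z := by
  rintro w ⟨hb, hne⟩
  have hb : dist x w + dist w z = dist x z := hb
  have hne : w ≠ z := hne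
  rcases btw_trich hcol hb with h | h
  · by_cases hwy : w = y
    · right
      subst hwy
      refine ⟨by simp [dist_self], ?_⟩
      exact hne
    · exact Or.inl ⟨h, hwy⟩
  · exact Or.inr ⟨h, hne⟩

-- if p ∈ [x,y] and q ∈ [y,z] then y is between p and q
lemma btw_mid (hcol : dist x y + dist y z = dist x z) {p q : ℍ}
    (hp : dist x p + dist p y = dist x y) (hq : dist y q + dist q z = dist y z) :
    dist p y + dist y q = dist p q := by
  have t1 : dist x q ≤ dist x p + dist p q := dist_triangle x p q
  have t2 : dist x z ≤ dist x q + dist q z := dist_triangle x q z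
  have t3 : dist p q ≤ dist p y + dist y q := dist_triangle p y q
  linarith

end SegLemmas

section Claims

variable {x y z : ℍ}

lemma claim1 (hcol : dist x y + dist y z = dist x z) {s : Sym2 (OnePoint ℝ)} {p : ℍ}
    (h1 : geod s ∩ segCO x y = {p}) : geod s ∩ segCO x z = {p} := by
  have hp : p ∈ geod s ∩ segCO x y := by rw [h1]; rfl
  refine Set.eq_singleton_iff_unique_mem.2 ⟨⟨hp.1, seg_left hcol hp.2⟩, ?_⟩
  rintro q ⟨hqg, hqs⟩
  by_contra hqp
  rcases seg_union hcol hqs with hq | hq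
  · apply hqp
    have : q ∈ geod s ∩ segCO x y := ⟨hqg, hq⟩
    rw [h1] at this
    exact this
  · have hpy : p ≠ y := seg_mem_ne hp.2
    have hbtw : dist p y + dist y q = dist p q := btw_mid hcol (seg_mem_btw hp.2) (seg_mem_btw hq)
    have hyg : y ∈ geod s := geod_convex hp.1 hqg hbtw
    obtain ⟨m, hm1, hm2, hm3⟩ := exists_mid p y
    have hpos : 0 < dist p y := dist_pos.2 hpy
    have hmg : m ∈ geod s := geod_convex hp.1 hyg hm1
    have hmy : m ≠ y := by
      intro he
      rw [he, dist_self] at hm3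
      linarith
    have hmseg : m ∈ segCO x y := by
      refine ⟨?_, hmy⟩
      show dist x m + dist m y = dist x y
      have t1 : dist x m ≤ dist x p + dist p m := dist_triangle x p m
      have t2 : dist x y ≤ dist x m + dist m y := dist_triangle x m y
      have hpb := seg_mem_btw hp.2
      linarith
    have hmp : m = p := by
      have : m ∈ geod s ∩ segCO x y := ⟨hmg, hmseg⟩
      rw [h1] at this
      exact this
    rw [hmp, dist_self] at hm2
    linarith

lemma claim2 (hcol : dist x y + dist y z = dist x z) {s : Sym2 (OnePoint ℝ)} {p : ℍ}
    (h1 : geod s ∩ segCO y z = {p}) : geod s ∩ segCO x z = {p} := by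
  have hp : p ∈ geod s ∩ segCO y z := by rw [h1]; rfl
  have hyz : y ≠ z := by
    intro he
    have := seg_mem_btw hp.2
    rw [← he] at this
    have hne := seg_mem_ne hp.2
    rw [← he] at hne
    have : dist y p = 0 := by
      rw [dist_comm p y] at this
      linarith [dist_self y]
    exact hne (dist_eq_zero.1 this).symm
  refine Set.eq_singleton_iff_unique_mem.2 ⟨⟨hp.1, seg_right hcol hp.2⟩, ?_⟩
  rintro q ⟨hqg, hqs⟩
  by_contra hqp
  rcases seg_union hcol hqs with hq | hq
  · -- q ∈ segCO x y : derive contradiction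
    have hqy : q ≠ y := seg_mem_ne hq
    have hbtw : dist q y + dist y p = dist q p := btw_mid hcol (seg_mem_btw hq) (seg_mem_btw hp.2)
    have hyg : y ∈ geod s := geod_convex hqg hp.1 hbtw
    have hyp : y = p := by
      have hyseg : y ∈ segCO y z := ⟨by simp [dist_self], hyz⟩
      have : y ∈ geod s ∩ segCO y z := ⟨hyg, hyseg⟩
      rw [h1] at this
      exact this
    obtain ⟨m, hm1, hm2, hm3⟩ := exists_mid y z
    have hpos : 0 < dist y z := dist_pos.2 hyz
    have hmz : m ≠ z := by
      intro he
      rw [he, dist_self] at hm3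
      linarith
    have hmy : m ≠ y := by
      intro he
      rw [he, dist_self] at hm2
      linarith
    have hbtw2 : dist q y + dist y m = dist q m := btw_mid hcol (seg_mem_btw hq) hm1
    have hmg : m ∈ geod s := geod_extend hqy hqg hyg hbtw2
    have hmp : m = p := by
      have : m ∈ geod s ∩ segCO y z := ⟨hmg, ⟨hm1, hmz⟩⟩
      rw [h1] at this
      exact this
    rw [← hyp] at hmp
    exact hmy hmp
  · apply hqp
    have : q ∈ geod s ∩ segCO y z := ⟨hqg, hq⟩
    rw [h1] at this
    exact this

lemma main_split (x y z : ℍ) (hcol : dist x y + dist y z = dist x z) :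
    Gcross (segCO x z) = Gcross (segCO x y) ∪ Gcross (segCO y z) ∧
      Gcross (segCO x y) ∩ Gcross (segCO y z) = ∅ := by
  constructor
  · ext s
    constructor
    · rintro ⟨p, hps⟩
      have hp : p ∈ geod s ∩ segCO x z := by rw [hps]; rfl
      rcases seg_union hcol hp.2 with hq | hq
      · left
        refine ⟨p, Set.eq_singleton_iff_unique_mem.2 ⟨⟨hp.1, hq⟩, ?_⟩⟩
        rintro q ⟨hqg, hqs⟩
        have : q ∈ geod s ∩ segCO x z := ⟨hqg, seg_left hcol hqs⟩
        rw [hps] at this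
        exact this
      · right
        refine ⟨p, Set.eq_singleton_iff_unique_mem.2 ⟨⟨hp.1, hq⟩, ?_⟩⟩
        rintro q ⟨hqg, hqs⟩
        have : q ∈ geod s ∩ segCO x z := ⟨hqg, seg_right hcol hqs⟩
        rw [hps] at this
        exact this
    · rintro (⟨p, hps⟩ | ⟨p, hps⟩)
      · exact ⟨p, claim1 hcol hps⟩
      · exact ⟨p, claim2 hcol hps⟩
  · ext s
    simp only [Set.mem_inter_iff, Set.mem_empty_iff_false, iff_false, not_and]
    rintro ⟨p, hp⟩ ⟨p', hp'⟩
    have e1 := claim1 hcol hp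
    have e2 := claim2 hcol hp'
    have : p = p' := by
      have := e1.symm.trans e2
      exact Set.singleton_eq_singleton_iff.1 this
    subst this
    have hp1 : p ∈ segCO x y := by
      have : p ∈ geod s ∩ segCO x y := by rw [hp]; rfl
      exact this.2
    have hp2 : p ∈ segCO y z := by
      have : p ∈ geod s ∩ segCO y z := by rw [hp']; rfl
      exact this.2
    have : p ∈ segCO x y ∩ segCO y z := ⟨hp1, hp2⟩
    rw [seg_disjoint hcol] at this
    exact this

end Claims


theorem crossing_set_disjoint_union_of_collinear (x y z : ℍ)
    (hcol : dist x y + dist y z = dist x z) :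
    (Gcross (segCO x z) = Gcross (segCO x y) ∪ Gcross (segCO y z) ∧
      Gcross (segCO x y) ∩ Gcross (segCO y z) = ∅) ∧
    (Gcross (segCO z x) = Gcross (segCO y x) ∪ Gcross (segCO z y) ∧
      Gcross (segCO y x) ∩ Gcross (segCO z y) = ∅) := by
  have hcol' : dist z y + dist y x = dist z x := by
    rw [dist_comm z y, dist_comm y x, dist_comm z x]
    linarith
  refine ⟨main_split x y z hcol, ?_⟩
  obtain ⟨h1, h2⟩ := main_split z y x hcol'
  rw [Set.union_comm] at h1
  rw [Set.inter_comm] at h2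
  exact ⟨h1, h2⟩
end
end
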